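/- Let Ω ⊆ ℂ^m be a nonempty bounded connected open set and let f : Ω × Ω → ℂ be a function such that the map (z, w) ↦ f(z, w̄) is holomorphic (jointly complex differentiable) on Ω × Ω*, where Ω* := { w̄ : w ∈ Ω } and w̄ denotes componentwise complex conjugation. If f(z, z) = 0 for all z ∈ Ω, then f(z, w) = 0 for all (z, w) ∈ Ω × Ω. -/

import Mathlib

open Metric Complex Filter Function Set

/-- A holomorphic function on a polydisc vanishing on real points vanishes identically. -/
lemma key_real_vanish {m : ℕ} {r : ℝ} (hr : 0 < r) {F : (Fin m → ℂ) → ℂ}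
    (hF : DifferentiableOn ℂ F (Metric.ball 0 r))
    (h0 : ∀ x ∈ Metric.ball (0 : Fin m → ℂ) r, (∀ i, (x i).im = 0) → F x = 0) :
    ∀ x ∈ Metric.ball (0 : Fin m → ℂ) r, F x = 0 := by
  suffices H : ∀ k : ℕ, ∀ x ∈ Metric.ball (0 : Fin m → ℂ) r,
      (∀ i : Fin m, k ≤ (i : ℕ) → (x i).im = 0) → F x = 0 by
    intro x hx
    exact H m x hx (fun i hi => absurd hi (Nat.not_le.2 i.isLt))
  intro k
  induction k with
  | zero => exact fun x hx h => h0 x hx fun i => h i (Nat.zero_le _)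
  | succ k ih =>
    intro x hx hxk
    by_cases hk : k < m
    · set κ : Fin m := ⟨k, hk⟩ with hκ
      set A : ℂ → (Fin m → ℂ) := fun t => Function.update x κ t with hA
      have hAeq : A = fun t => (Function.update x κ 0) + t • Pi.single κ (1:ℂ) := by
        funext t i
        by_cases h : i = κ
        · subst h; simp [hA]
        · simp [hA, Function.update_apply, Pi.single_apply, h]
      have hAdiff : Differentiable ℂ A := by
        rw [hAeq]
        exact (differentiable_id.smul_const _).const_add _
      have hAmaps : ∀ t ∈ Metric.ball (0:ℂ) r, A t ∈ Metric.ball (0 : Fin m → ℂ) r := by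
        intro t ht
        rw [mem_ball_zero_iff] at ht ⊢
        rw [pi_norm_lt_iff hr]
        intro i
        by_cases h : i = κ
        · subst h; simpa [hA] using ht
        · rw [hA]; simp only [Function.update_apply, if_neg h]
          exact lt_of_le_of_lt (norm_le_pi_norm x i) (mem_ball_zero_iff.1 hx)
      have hφ : DifferentiableOn ℂ (F ∘ A) (Metric.ball (0:ℂ) r) :=
        hF.comp hAdiff.differentiableOn hAmaps
      have hφreal : ∀ a : ℝ, (a:ℂ) ∈ Metric.ball (0:ℂ) r → (F ∘ A) a = 0 := by
        intro a ha
        refine ih (A a) (hAmaps _ ha) ?_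
        intro i hi
        by_cases h : i = κ
        · subst h; simp [hA]
        · have hi' : k + 1 ≤ (i : ℕ) := by
            rcases Nat.lt_or_ge (i : ℕ) (k+1) with h' | h'
            · exfalso; apply h; apply Fin.ext
              exact le_antisymm (Nat.lt_succ_iff.1 h') hi
            · exact h'
          rw [hA]; simp only [Function.update_apply, if_neg h]
          exact hxk i hi'
      -- frequently zero near 0 along real sequence
      have hfreq : ∃ᶠ z in nhdsWithin (0:ℂ) {(0:ℂ)}ᶜ, (F ∘ A) z = 0 := by
        set u : ℕ → ℂ := fun n => ((r/2) / (n+1) : ℝ) with hu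
        have hpos : ∀ n : ℕ, (0:ℝ) < (r/2) / (n+1) := by
          intro n; positivity
        have hmem : ∀ n, u n ∈ Metric.ball (0:ℂ) r := by
          intro n
          rw [mem_ball_zero_iff, hu]
          have h1 : (r/2) / ((n:ℝ)+1) ≤ r/2 := by
            apply div_le_self (by positivity)
            linarith [Nat.cast_nonneg (α := ℝ) n]
          calc ‖(((r/2) / (n+1) : ℝ) : ℂ)‖ = |(r/2) / ((n:ℝ)+1)| := by
                rw [Complex.norm_real]; rfl
            _ = (r/2) / ((n:ℝ)+1) := abs_of_pos (hpos n)
            _ ≤ r/2 := h1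
            _ < r := by linarith
        have htend : Tendsto u atTop (nhdsWithin (0:ℂ) {(0:ℂ)}ᶜ) := by
          apply tendsto_nhdsWithin_of_tendsto_nhds_of_eventually_within
          · have h1 : Tendsto (fun n : ℕ => (r/2) / ((n:ℝ)+1)) atTop (nhds 0) := by
              simpa [div_eq_mul_inv, mul_comm] using
                (tendsto_one_div_add_atTop_nhds_zero_nat).const_mul (r/2)
            have h2 := (Complex.continuous_ofReal.tendsto 0).comp h1
            have he : u = Complex.ofReal ∘ (fun n : ℕ => (r/2)/((n:ℝ)+1)) := rfl
            rw [he]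
            simpa using h2
          · apply Filter.Eventually.of_forall
            intro n
            simp only [Set.mem_compl_iff, Set.mem_singleton_iff, hu,
              Complex.ofReal_eq_zero]
            exact (hpos n).ne'
        exact htend.frequently (Filter.Frequently.of_forall fun n => hφreal _ (hmem n))
      have := (hφ.analyticOnNhd Metric.isOpen_ball).eqOn_zero_of_preconnected_of_frequently_eq_zero
        (convex_ball (0:ℂ) r).isPreconnected (mem_ball_self hr) hfreq
      have hxκ : x κ ∈ Metric.ball (0:ℂ) r :=
        mem_ball_zero_iff.2 (lt_of_le_of_lt (norm_le_pi_norm x κ) (mem_ball_zero_iff.1 hx))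
      have := this hxκ
      simpa [hA, Function.update_eq_self] using this
    · exact ih x hx fun i hi => absurd (lt_of_le_of_lt hi i.isLt) hk

/-- Identity principle for `ℂ`-differentiable functions on an open preconnected set in a
complex normed space, proved via one-variable slices along complex lines. -/
lemma eqOn_zero_of_eventuallyEq_zero {E : Type*} [NormedAddCommGroup E] [NormedSpace ℂ E]
    {U : Set E} (hUo : IsOpen U) (hUc : IsPreconnected U) {g : E → ℂ}
    (hg : DifferentiableOn ℂ g U) {x₀ : E} (h₀ : x₀ ∈ U) (hev : g =ᶠ[nhds x₀] (0 : E → ℂ)) :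
    Set.EqOn g 0 U := by
  set S : Set E := {x | g =ᶠ[nhds x] (0 : E → ℂ)} with hS
  have hSo : IsOpen S := isOpen_setOf_eventually_nhds
  have main : closure S ∩ U ⊆ S := by
    rintro x ⟨hxS, hxU⟩
    obtain ⟨r, hr, hball⟩ := Metric.isOpen_iff.1 hUo x hxU
    obtain ⟨y, hyS, hxy⟩ : ∃ y ∈ S, dist x y < r/4 :=
      Metric.mem_closure_iff.1 hxS (r/4) (by linarith)
    -- show g = 0 on ball x (r/4)
    have hzero : ∀ z ∈ Metric.ball x (r/4), g z = 0 := by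
      intro z hz
      set A : ℂ → E := fun t => y + t • (z - y) with hA
      have hAdiff : Differentiable ℂ A := (differentiable_id.smul_const _).const_add _
      have hzy : ‖z - y‖ < r/2 := by
        have h1 : dist z y ≤ dist z x + dist x y := dist_triangle z x y
        have h2 : dist z x < r/4 := hz
        have h3 : dist x y < r/4 := hxy
        rw [← dist_eq_norm]
        linarith
      have hAmaps : ∀ t ∈ Metric.ball (0:ℂ) (3/2), A t ∈ U := by
        intro t ht
        apply hball
        rw [Metric.mem_ball, dist_eq_norm, hA]
        have : y + t • (z - y) - x = (y - x) + t • (z - y) := by abel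
        rw [this]
        calc ‖(y - x) + t • (z - y)‖ ≤ ‖y - x‖ + ‖t • (z - y)‖ := norm_add_le _ _
          _ = ‖y - x‖ + ‖t‖ * ‖z - y‖ := by rw [norm_smul]
          _ < r/4 + (3/2) * (r/2) := by
              apply add_lt_add_of_lt_of_le
              · rw [← dist_eq_norm, dist_comm]; exact hxy
              · apply mul_le_mul (le_of_lt (mem_ball_zero_iff.1 ht)) hzy.le (norm_nonneg _)
                  (by norm_num)
          _ = r := by ring
      have hφ : DifferentiableOn ℂ (g ∘ A) (Metric.ball (0:ℂ) (3/2)) :=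
        hg.comp hAdiff.differentiableOn hAmaps
      have hφev : (g ∘ A) =ᶠ[nhds (0:ℂ)] (0 : ℂ → ℂ) := by
        have hA0 : A 0 = y := by simp [hA]
        have htend : Tendsto A (nhds 0) (nhds y) := by
          rw [← hA0]; exact hAdiff.continuous.continuousAt
        exact hyS.comp_tendsto htend
      have := (hφ.analyticOnNhd Metric.isOpen_ball).eqOn_zero_of_preconnected_of_eventuallyEq_zero
        (convex_ball (0:ℂ) (3/2)).isPreconnected (mem_ball_self (by norm_num)) hφev
      have h1 : (1:ℂ) ∈ Metric.ball (0:ℂ) (3/2) := by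
        rw [mem_ball_zero_iff]; norm_num
      have := this h1
      simpa [hA] using this
    rw [hS, Set.mem_setOf_eq]
    filter_upwards [Metric.ball_mem_nhds x (by linarith : (0:ℝ) < r/4)] with z hz
    exact hzero z hz
  have hU : U ⊆ S := hUc.subset_of_closure_inter_subset hSo ⟨x₀, h₀, hev⟩ main
  intro z hz
  have h2 : g =ᶠ[nhds z] (0 : E → ℂ) := hU hz
  exact h2.self_of_nhds

/-- If `f(z, w)` is holomorphic in `z` and antiholomorphic in `w` jointly on `Ω × Ω`
(i.e. `(z, w) ↦ f(z, w̄)` is holomorphic on `Ω × Ω*`, where `Ω* = {w̄ : w ∈ Ω}` and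
the bar is componentwise conjugation) and `f(z, z) = 0` for all `z ∈ Ω`, then `f`
vanishes identically on `Ω × Ω`. -/
theorem eq_zero_of_diag_zero {m : ℕ} (Ω : Set (Fin m → ℂ)) (hne : Ω.Nonempty)
    (hΩo : IsOpen Ω) (hΩc : IsConnected Ω) (hΩb : Bornology.IsBounded Ω)
    (f : (Fin m → ℂ) → (Fin m → ℂ) → ℂ)
    (hf : DifferentiableOn ℂ
      (fun p : (Fin m → ℂ) × (Fin m → ℂ) => f p.1 fun i => (starRingEnd ℂ) (p.2 i))
      (Ω ×ˢ ((fun w : Fin m → ℂ => fun i => (starRingEnd ℂ) (w i)) '' Ω)))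
    (hdiag : ∀ z ∈ Ω, f z z = 0) :
    ∀ z ∈ Ω, ∀ w ∈ Ω, f z w = 0 := by
  classical
  set σf : (Fin m → ℂ) → (Fin m → ℂ) := fun w => fun i => (starRingEnd ℂ) (w i) with hσf
  have hσσ : ∀ w, σf (σf w) = w := by
    intro w; funext i; exact Complex.conj_conj _
  have hσcont : Continuous σf :=
    continuous_pi fun i => Complex.continuous_conj.comp (continuous_apply i)
  have hσnorm : ∀ v, ‖σf v‖ = ‖v‖ := by
    intro v; simp [hσf, Pi.norm_def]
  set Ωs : Set (Fin m → ℂ) := σf '' Ω with hΩs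
  set U : Set ((Fin m → ℂ) × (Fin m → ℂ)) := Ω ×ˢ Ωs with hU
  set g : ((Fin m → ℂ) × (Fin m → ℂ)) → ℂ :=
    fun p => f p.1 fun i => (starRingEnd ℂ) (p.2 i) with hg
  have hgdiff : DifferentiableOn ℂ g U := hf
  have hΩso : IsOpen Ωs := by
    have himg : Ωs = σf ⁻¹' Ω := by
      ext w
      constructor
      · rintro ⟨a, ha, rfl⟩
        simpa [Set.mem_preimage, hσσ] using ha
      · intro hw
        exact ⟨_, hw, hσσ w⟩
    rw [himg]
    exact hΩo.preimage hσcont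
  have hΩsc : IsConnected Ωs := hΩc.image σf hσcont.continuousOn
  have hUo : IsOpen U := hΩo.prod hΩso
  have hUc : IsPreconnected U := (hΩc.prod hΩsc).isPreconnected
  obtain ⟨z₀, hz₀⟩ := hne
  set c : (Fin m → ℂ) × (Fin m → ℂ) := (z₀, σf z₀) with hc
  have hcU : c ∈ U := ⟨hz₀, ⟨z₀, hz₀, rfl⟩⟩
  obtain ⟨r, hr, hball⟩ := Metric.isOpen_iff.1 hUo c hcU
  -- the shifted function h
  set h : ((Fin m → ℂ) × (Fin m → ℂ)) → ℂ := fun p => g (c + p) with hh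
  have hmapsT : ∀ p ∈ Metric.ball (0 : (Fin m → ℂ) × (Fin m → ℂ)) r, c + p ∈ U := by
    intro p hp
    apply hball
    rw [Metric.mem_ball, dist_self_add_left]
    exact mem_ball_zero_iff.1 hp
  have hhdiff : DifferentiableOn ℂ h (Metric.ball 0 r) :=
    hgdiff.comp ((differentiable_const c).add differentiable_id).differentiableOn hmapsT
  have hdiagh : ∀ u : Fin m → ℂ, ‖u‖ < r → h (u, σf u) = 0 := by
    intro u hu
    have hc2 : c + (u, σf u) = (z₀ + u, σf (z₀ + u)) := by
      rw [hc]
      ext i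
      · rfl
      · show σf z₀ i + σf u i = σf (z₀ + u) i
        simp [hσf, map_add]
    have hmem : z₀ + u ∈ Ω := by
      have : c + ((u, 0) : (Fin m → ℂ) × (Fin m → ℂ)) ∈ U := by
        apply hmapsT
        rw [mem_ball_zero_iff, Prod.norm_def]
        simp only [norm_zero]
        rw [max_eq_left (norm_nonneg u)]
        exact hu
      exact this.1
    rw [hh]
    show g (c + (u, σf u)) = 0
    rw [hc2, hg]
    show f (z₀ + u) (fun i => (starRingEnd ℂ) (σf (z₀ + u) i)) = 0
    have : (fun i => (starRingEnd ℂ) (σf (z₀ + u) i)) = z₀ + u := hσσ (z₀ + u)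
    rw [this]
    exact hdiag _ hmem
  set ρ : ℝ := r / 4 with hρdef
  have hρ : 0 < ρ := by rw [hρdef]; linarith
  have hnormI : ∀ q : Fin m → ℂ, ‖Complex.I • q‖ = ‖q‖ := by
    intro q; rw [norm_smul, Complex.norm_I, one_mul]
  -- maps into the product ball
  have hmaps2 : ∀ p q : Fin m → ℂ, ‖p‖ < ρ → ‖q‖ < ρ →
      ((p + Complex.I • q, p - Complex.I • q) : (Fin m → ℂ) × (Fin m → ℂ))
        ∈ Metric.ball (0 : (Fin m → ℂ) × (Fin m → ℂ)) r := by
    intro p q hp hq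
    rw [mem_ball_zero_iff, Prod.norm_def]
    have h1 : ‖p + Complex.I • q‖ ≤ ‖p‖ + ‖q‖ := by
      calc ‖p + Complex.I • q‖ ≤ ‖p‖ + ‖Complex.I • q‖ := norm_add_le _ _
        _ = ‖p‖ + ‖q‖ := by rw [hnormI]
    have h2 : ‖p - Complex.I • q‖ ≤ ‖p‖ + ‖q‖ := by
      calc ‖p - Complex.I • q‖ ≤ ‖p‖ + ‖Complex.I • q‖ := norm_sub_le _ _
        _ = ‖p‖ + ‖q‖ := by rw [hnormI]
    have : ‖p‖ + ‖q‖ < r := by rw [hρdef] at hp hq; linarith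
    exact max_lt (lt_of_le_of_lt h1 this) (lt_of_le_of_lt h2 this)
  have hHdiff : ∀ q : Fin m → ℂ, ‖q‖ < ρ → DifferentiableOn ℂ
      (fun p => h (p + Complex.I • q, p - Complex.I • q)) (Metric.ball 0 ρ) := by
    intro q hq
    apply hhdiff.comp
    · exact (Differentiable.prodMk ((differentiable_id).add_const _)
        ((differentiable_id).sub_const _)).differentiableOn
    · intro p hp
      exact hmaps2 p q (mem_ball_zero_iff.1 hp) hq
  have hHdiff2 : ∀ p : Fin m → ℂ, ‖p‖ < ρ → DifferentiableOn ℂ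
      (fun q => h (p + Complex.I • q, p - Complex.I • q)) (Metric.ball 0 ρ) := by
    intro p hp
    apply hhdiff.comp
    · apply Differentiable.differentiableOn
      apply Differentiable.prodMk
      · exact (differentiable_id.const_smul (Complex.I)).const_add _
      · exact (differentiable_const _).sub (differentiable_id.const_smul (Complex.I))
    · intro q hq
      exact hmaps2 p q hp (mem_ball_zero_iff.1 hq)
  have hconjkey : ∀ x q : Fin m → ℂ, (∀ i, (x i).im = 0) → (∀ i, (q i).im = 0) →
      σf (x + Complex.I • q) = x - Complex.I • q := by
    intro x q hx hq
    funext i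
    show (starRingEnd ℂ) (x i + Complex.I * q i) = x i - Complex.I * q i
    rw [map_add, map_mul, Complex.conj_I,
      Complex.conj_eq_iff_im.2 (hx i), Complex.conj_eq_iff_im.2 (hq i)]
    ring
  -- step 1: vanish for q real
  have step1 : ∀ q ∈ Metric.ball (0 : Fin m → ℂ) ρ, (∀ i, (q i).im = 0) →
      ∀ p ∈ Metric.ball (0 : Fin m → ℂ) ρ,
        h (p + Complex.I • q, p - Complex.I • q) = 0 := by
    intro q hq hqre
    apply key_real_vanish hρ (hHdiff q (mem_ball_zero_iff.1 hq))
    intro x hx hxre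
    rw [← hconjkey x q hxre hqre]
    apply hdiagh
    calc ‖x + Complex.I • q‖ ≤ ‖x‖ + ‖q‖ := by
          calc ‖x + Complex.I • q‖ ≤ ‖x‖ + ‖Complex.I • q‖ := norm_add_le _ _
            _ = ‖x‖ + ‖q‖ := by rw [hnormI]
      _ < r := by
          have h1 := mem_ball_zero_iff.1 hx
          have h2 := mem_ball_zero_iff.1 hq
          rw [hρdef] at h1 h2; linarith
  -- step 2: vanish for all p, q in the ball
  have step2 : ∀ p ∈ Metric.ball (0 : Fin m → ℂ) ρ, ∀ q ∈ Metric.ball (0 : Fin m → ℂ) ρ,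
      h (p + Complex.I • q, p - Complex.I • q) = 0 := by
    intro p hp
    apply key_real_vanish hρ (hHdiff2 p (mem_ball_zero_iff.1 hp))
    intro q hq hqre
    exact step1 q hq hqre p hp
  -- step 3: h vanishes on the small product ball
  have step3 : ∀ u v : Fin m → ℂ, ‖u‖ < ρ → ‖v‖ < ρ → h (u, v) = 0 := by
    intro u v hu hv
    set p : Fin m → ℂ := (2⁻¹ : ℂ) • (u + v) with hp
    set q : Fin m → ℂ := (2⁻¹ : ℂ) • (Complex.I • (v - u)) with hq
    have hIq : Complex.I • q = (-(2⁻¹) : ℂ) • (v - u) := by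
      rw [hq, smul_smul, smul_smul]
      congr 1
      rw [mul_comm Complex.I (2⁻¹ : ℂ), mul_assoc, Complex.I_mul_I]
      ring
    have e1 : p + Complex.I • q = u := by
      rw [hIq, hp]
      module
    have e2 : p - Complex.I • q = v := by
      rw [hIq, hp]
      module
    have hpn : ‖p‖ < ρ := by
      rw [hp, norm_smul]
      have : ‖(2⁻¹ : ℂ)‖ = 2⁻¹ := by norm_num
      rw [this]
      have := norm_add_le u v
      calc (2⁻¹ : ℝ) * ‖u + v‖ ≤ 2⁻¹ * (‖u‖ + ‖v‖) := by
            apply mul_le_mul_of_nonneg_left (norm_add_le u v) (by norm_num)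
        _ < ρ := by linarith
    have hqn : ‖q‖ < ρ := by
      rw [hq, norm_smul, hnormI]
      have : ‖(2⁻¹ : ℂ)‖ = 2⁻¹ := by norm_num
      rw [this]
      have := norm_sub_le v u
      calc (2⁻¹ : ℝ) * ‖v - u‖ ≤ 2⁻¹ * (‖v‖ + ‖u‖) := by
            apply mul_le_mul_of_nonneg_left (norm_sub_le v u) (by norm_num)
        _ < ρ := by linarith
    have := step2 p (mem_ball_zero_iff.2 hpn) q (mem_ball_zero_iff.2 hqn)
    rwa [e1, e2] at this
  -- step 4: g vanishes near c
  have hev : g =ᶠ[nhds c] (0 : ((Fin m → ℂ) × (Fin m → ℂ)) → ℂ) := by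
    filter_upwards [Metric.ball_mem_nhds c hρ] with p hp
    have hpc : ‖p - c‖ < ρ := by
      rw [← dist_eq_norm]; exact Metric.mem_ball.1 hp
    have h1 : ‖(p - c).1‖ < ρ := lt_of_le_of_lt (norm_fst_le (p - c)) hpc
    have h2 : ‖(p - c).2‖ < ρ := lt_of_le_of_lt (norm_snd_le (p - c)) hpc
    have h3 : g (c + ((p - c).1, (p - c).2)) = 0 := step3 (p - c).1 (p - c).2 h1 h2
    show g p = 0
    have hcp : c + ((p - c).1, (p - c).2) = p := by
      rw [Prod.mk.eta]; abel
    rwa [hcp] at h3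
  -- identity principle
  have hEq : Set.EqOn g 0 U :=
    eqOn_zero_of_eventuallyEq_zero hUo hUc hgdiff hcU hev
  intro z hz w hw
  have hmem : ((z, σf w) : (Fin m → ℂ) × (Fin m → ℂ)) ∈ U := ⟨hz, ⟨w, hw, rfl⟩⟩
  have := hEq hmem
  rw [hg] at this
  simp only [Pi.zero_apply] at this
  have hww : (fun i => (starRingEnd ℂ) (σf w i)) = w := hσσ w
  rwa [hww] at this
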